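/- Let R ⊆ A be integral domains with a retraction Φ : A → R with finitely generated kernel. Suppose p₁, …, p_n are elements of R that are prime in both R and A, and A[1/(p₁⋯p_n)] is a polynomial ring in one variable over R[1/(p₁⋯p_n)]. Then there exists x ∈ Ker Φ such that A = R[x] is a polynomial ring in one variable over R. -/

import Mathlib

open Polynomial

section aux

variable {A : Type*} [CommRing A]

/-- If `Φ` is a retraction onto the subring `R` killing `x`, then `Φ` applied to a
polynomial expression in `x` gives the constant coefficient. -/
lemma phi_aeval9 {R : Subring A} (Φ : A →+* R) (hΦ : ∀ r : R, Φ (r : A) = r)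
    {x : A} (hx : Φ x = 0) (P : Polynomial R) :
    Φ (Polynomial.aeval x P) = P.coeff 0 := by
  induction P using Polynomial.induction_on' with
  | add p q hp hq => simp [hp, hq]
  | monomial n a =>
    have hA : algebraMap R A a = (a : A) := rfl
    rw [Polynomial.aeval_monomial, map_mul, map_pow, hx, hA, hΦ]
    cases n with
    | zero => simp
    | succ n => simp [Polynomial.coeff_monomial]

/-- In a domain, if a product of primes divides a unit multiple of another product of
primes, the first list is no longer than the second. -/
lemma length_le_of_prod_dvd9 [IsDomain A] (L : List A) (hL : ∀ p ∈ L, Prime p) :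
    ∀ (M : List A), (∀ q ∈ M, Prime q) → ∀ u : A, IsUnit u → L.prod ∣ u * M.prod →
      L.length ≤ M.length := by
  classical
  induction L with
  | nil => intros; simp
  | cons a L ih =>
    intro M hM u hu hdvd
    have ha : Prime a := hL a List.mem_cons_self
    have hadvd : a ∣ u * M.prod := by
      refine dvd_trans ?_ hdvd
      rw [List.prod_cons]
      exact dvd_mul_right a L.prod
    have haM : a ∣ M.prod := by
      rcases ha.dvd_mul.mp hadvd with h | h
      · exact absurd (isUnit_of_dvd_unit h hu) ha.not_unit
      · exact h
    obtain ⟨q, hqM, haq⟩ := ha.dvd_prod_iff.mp haM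
    have hq : Prime q := hM q hqM
    obtain ⟨w, hw⟩ := haq
    have hwu : IsUnit w := by
      rcases hq.irreducible.isUnit_or_isUnit hw with h | h
      · exact absurd h ha.not_unit
      · exact h
    have hMp : M.prod = a * (w * (M.erase q).prod) := by
      rw [← List.prod_erase hqM, hw]; ring
    have hcancel : L.prod ∣ (u * w) * (M.erase q).prod := by
      have h2 : a * L.prod ∣ a * ((u * w) * (M.erase q).prod) := by
        have : u * M.prod = a * (u * w * (M.erase q).prod) := by rw [hMp]; ring
        rw [← this, ← List.prod_cons]
        exact hdvd
      exact (mul_dvd_mul_iff_left ha.ne_zero).mp h2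
    have hih := ih (fun r hr => hL r (List.mem_cons_of_mem _ hr)) (M.erase q)
      (fun r hr => hM r (List.mem_of_mem_erase hr)) (u * w) (hu.mul hwu) hcancel
    have hlen : (M.erase q).length = M.length - 1 := List.length_erase_of_mem hqM
    have hMpos : 1 ≤ M.length := List.length_pos_iff.mpr (List.ne_nil_of_mem hqM)
    simp only [List.length_cons]
    omega

end aux

/-- Let `R ⊆ A` be integral domains with a retraction `Φ : A → R`
with finitely generated kernel. Suppose `p₁, …, pₙ ∈ R` are prime in both `R` and
`A`, and `A[1/(p₁⋯pₙ)]` is a polynomial ring in one variable over `R[1/(p₁⋯pₙ)]`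
(encoded: there is `x₀` transcendental over `R` with `(p₁⋯pₙ)ᵐ a ∈ R[x₀]` for all
`a ∈ A` and some `m`). Then there exists `x ∈ Ker Φ` such that `A = R[x]` is a
polynomial ring in one variable over `R`. -/
theorem stmt9 {A : Type*} [CommRing A] [IsDomain A] (R : Subring A)
    (Φ : A →+* R) (hΦ : ∀ r : R, Φ (r : A) = r)
    (hfg : (RingHom.ker Φ).FG)
    (n : ℕ) (p : Fin n → R)
    (hpR : ∀ i, Prime (p i)) (hpA : ∀ i, Prime ((p i : A)))
    (hloc : ∃ x₀ : A, Transcendental R x₀ ∧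
      ∀ a : A, ∃ m : ℕ, (∏ i, (p i : A)) ^ m * a ∈ Algebra.adjoin R {x₀}) :
    ∃ x : A, Φ x = 0 ∧ Transcendental R x ∧ Algebra.adjoin R {x} = ⊤ := by
  classical
  obtain ⟨x₀, htr0, hloc0⟩ := hloc
  set fA : A := ∏ i, ((p i : A)) with hfA_def
  set fR : R := ∏ i, p i with hfR_def
  have hfA : ((fR : R) : A) = fA := by
    rw [hfR_def, hfA_def]
    exact map_prod R.subtype p Finset.univ
  have hfA0 : fA ≠ 0 := by
    rw [hfA_def]
    exact Finset.prod_ne_zero_iff.mpr (fun i _ => (hpA i).ne_zero)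
  -- replace x₀ by x₁ := x₀ - Φ x₀ ∈ ker Φ
  set x₁ : A := x₀ - ((Φ x₀ : R) : A) with hx₁_def
  have hΦx₁ : Φ x₁ = 0 := by rw [hx₁_def, map_sub, hΦ, sub_self]
  have hadj01 : Algebra.adjoin R {x₀} = Algebra.adjoin R {x₁} := by
    apply le_antisymm
    · apply Algebra.adjoin_le
      intro z hz
      rw [Set.mem_singleton_iff] at hz
      subst hz
      have : z = x₁ + ((Φ z : R) : A) := by rw [hx₁_def]; ring
      rw [this]
      exact add_mem (Algebra.subset_adjoin rfl) (Subalgebra.algebraMap_mem _ _)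
    · apply Algebra.adjoin_le
      intro z hz
      rw [Set.mem_singleton_iff] at hz
      subst hz
      exact sub_mem (Algebra.subset_adjoin rfl) (Subalgebra.algebraMap_mem _ _)
  have htr1 : Transcendental R x₁ := by
    rintro ⟨P, hP0, hPev⟩
    apply htr0
    refine ⟨P.comp (X - C (Φ x₀)), ?_, ?_⟩
    · intro h
      apply hP0
      have : P = (P.comp (X - C (Φ x₀))).comp (X + C (Φ x₀)) := by
        rw [Polynomial.comp_assoc]
        simp
      rw [this, h, Polynomial.zero_comp]
    · rw [Polynomial.aeval_comp]
      have : (Polynomial.aeval x₀) (X - C (Φ x₀)) = x₁ := by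
        simp [hx₁_def]
        rfl
      rw [this, hPev]
  have hne0 : x₁ ≠ 0 := by
    intro h
    exact htr1 ⟨X, X_ne_zero, by simp [h]⟩
  have hloc1 : ∀ a : A, ∃ m : ℕ, fA ^ m * a ∈ Algebra.adjoin R {x₁} := by
    intro a
    obtain ⟨m, hm⟩ := hloc0 a
    exact ⟨m, hadj01 ▸ hm⟩
  -- membership in R[x₁] with Φ = 0 implies divisibility by x₁
  have hdvd_of_adjoin : ∀ z : A, z ∈ Algebra.adjoin R {x₁} → Φ z = 0 → x₁ ∣ z := by
    intro z hz hΦz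
    rw [Algebra.adjoin_singleton_eq_range_aeval] at hz
    obtain ⟨P, hP⟩ := hz
    have hP2 : Polynomial.aeval x₁ P = z := hP
    have hc : P.coeff 0 = 0 := by
      rw [← phi_aeval9 Φ hΦ hΦx₁ P, hP2, hΦz]
    obtain ⟨P', hP'⟩ := X_dvd_iff.mpr hc
    refine ⟨Polynomial.aeval x₁ P', ?_⟩
    rw [← hP2, hP', map_mul, Polynomial.aeval_X]
  -- uniform exponent over generators of the kernel
  obtain ⟨S, hS⟩ := hfg
  set g : A → ℕ := fun a => (hloc1 a).choose with hg_def
  set m : ℕ := S.sup g with hm_def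
  have hfAadj : fA ∈ Algebra.adjoin R {x₁} := by
    rw [← hfA]
    exact Subalgebra.algebraMap_mem _ _
  have hgm : ∀ s ∈ S, fA ^ m * s ∈ Algebra.adjoin R {x₁} := by
    intro s hs
    have h1 : fA ^ (g s) * s ∈ Algebra.adjoin R {x₁} := (hloc1 s).choose_spec
    have h2 : g s ≤ m := Finset.le_sup hs
    have : fA ^ m * s = fA ^ (m - g s) * (fA ^ (g s) * s) := by
      rw [← mul_assoc, ← pow_add]
      congr 2
      omega
    rw [this]
    exact mul_mem (pow_mem hfAadj _) h1
  have hIdvd : ∀ a ∈ RingHom.ker Φ, x₁ ∣ fA ^ m * a := by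
    intro a ha
    rw [← hS] at ha
    induction ha using Submodule.span_induction with
    | mem s hs =>
      have hsk : s ∈ RingHom.ker Φ := by
        rw [← hS]
        exact Ideal.subset_span hs
      refine hdvd_of_adjoin _ (hgm s hs) ?_
      rw [map_mul, RingHom.mem_ker.mp hsk, mul_zero]
    | zero => exact ⟨0, by ring⟩
    | add y z hy hz ihy ihz =>
      have := dvd_add ihy ihz
      rwa [← mul_add] at this
    | smul c y hy ihy =>
      have h2 := ihy.mul_left c
      rw [smul_eq_mul]
      rwa [show c * (fA ^ m * y) = fA ^ m * (c * y) by ring] at h2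
  -- the list of prime factors of fA ^ m
  set M : List A := (List.replicate m (List.ofFn fun i => ((p i : A)))).flatten with hM_def
  have hMmem : ∀ z ∈ M, ∃ i, z = ((p i : A)) := by
    intro z hz
    rw [hM_def, List.mem_flatten] at hz
    obtain ⟨l, hl, hzl⟩ := hz
    have := List.eq_of_mem_replicate hl
    subst this
    obtain ⟨i, hi⟩ := List.mem_ofFn.mp hzl
    exact ⟨i, hi.symm⟩
  have hMprod : M.prod = fA ^ m := by
    rw [hM_def, List.prod_flatten, List.map_replicate, List.prod_replicate, List.prod_ofFn]
  have hMlen : M.length = n * m := by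
    rw [hM_def, List.length_flatten, List.map_replicate, List.sum_replicate]
    simp [List.length_ofFn, mul_comm]
  -- descent: divide x₁ by primes until none divides
  have descent : ∀ (fuel : ℕ) (L : List A) (y : A),
      (∀ z ∈ L, ∃ i, z = ((p i : A))) → y ∈ RingHom.ker Φ → x₁ = L.prod * y →
      L.length + fuel = n * m + 1 →
      ∃ (L' : List A) (y' : A), (∀ z ∈ L', ∃ i, z = ((p i : A))) ∧
        y' ∈ RingHom.ker Φ ∧ x₁ = L'.prod * y' ∧ ∀ i, ¬ ((p i : A)) ∣ y' := by
    intro fuel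
    induction fuel with
    | zero =>
      intro L y hLp hyI hxy hlen
      exfalso
      have hy0 : y ≠ 0 := by
        intro h
        exact hne0 (by rw [hxy, h, mul_zero])
      obtain ⟨t, ht⟩ := hIdvd y hyI
      have hLdvd : L.prod ∣ fA ^ m := by
        refine ⟨t, ?_⟩
        have h1 : fA ^ m * y = (L.prod * t) * y := by
          rw [ht, hxy]; ring
        exact mul_right_cancel₀ hy0 h1
      have hlen2 := length_le_of_prod_dvd9 L
        (fun z hz => by obtain ⟨i, rfl⟩ := hLp z hz; exact hpA i) M
        (fun z hz => by obtain ⟨i, rfl⟩ := hMmem z hz; exact hpA i) 1 isUnit_one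
        (by rw [one_mul, hMprod]; exact hLdvd)
      omega
    | succ fuel ih =>
      intro L y hLp hyI hxy hlen
      by_cases hnd : ∀ i, ¬ ((p i : A)) ∣ y
      · exact ⟨L, y, hLp, hyI, hxy, hnd⟩
      · push_neg at hnd
        obtain ⟨i, y', hy'⟩ := hnd
        have hy'I : y' ∈ RingHom.ker Φ := by
          have h1 : Φ ((p i : A)) * Φ y' = 0 := by
            rw [← map_mul, ← hy']
            exact RingHom.mem_ker.mp hyI
          rw [hΦ] at h1
          rcases mul_eq_zero.mp h1 with h | h
          · exact absurd h (hpR i).ne_zero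
          · exact RingHom.mem_ker.mpr h
        refine ih (((p i : A)) :: L) y' ?_ hy'I ?_ ?_
        · intro z hz
          rcases List.mem_cons.mp hz with h | h
          · exact ⟨i, h⟩
          · exact hLp z h
        · rw [List.prod_cons, hxy, hy']; ring
        · simp only [List.length_cons]; omega
  obtain ⟨L, x, hLmem, hxker, hx₁x, hnd⟩ := descent (n * m + 1) [] x₁
    (by intro z hz; simp at hz) (RingHom.mem_ker.mpr hΦx₁) (by simp) (by simp)
  have hLR : L.prod ∈ R := Subring.list_prod_mem R (by
    intro z hz
    obtain ⟨i, rfl⟩ := hLmem z hz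
    exact (p i).2)
  set cR : R := ⟨L.prod, hLR⟩ with hcR_def
  have hcRA : ((cR : R) : A) = L.prod := rfl
  have hx0 : x ≠ 0 := by
    intro h
    exact hne0 (by rw [hx₁x, h, mul_zero])
  have hΦx : Φ x = 0 := RingHom.mem_ker.mp hxker
  -- transcendence of x
  have htrx : Transcendental R x := by
    rintro ⟨P, hP0, hPev⟩
    apply htr1
    refine ⟨P.scaleRoots cR, ?_, ?_⟩
    · intro h
      apply hP0
      have := Polynomial.coeff_scaleRoots_natDegree P cR
      rw [h, Polynomial.coeff_zero] at this
      exact Polynomial.leadingCoeff_eq_zero.mp this.symm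
    · have h1 := Polynomial.scaleRoots_aeval_eq_zero (r := cR) hPev
      have h2 : (algebraMap R A) cR * x = x₁ := by
        rw [hx₁x]; rfl
      rwa [h2] at h1
  -- every element of the kernel is divisible by x
  have cancel : ∀ (L' : List A), (∀ z ∈ L', ∃ i, z = ((p i : A))) →
      ∀ a : A, x ∣ L'.prod * a → x ∣ a := by
    intro L'
    induction L' with
    | nil => intro _ a h; simpa using h
    | cons z L'' ih =>
      intro hz a hdvd
      obtain ⟨i, rfl⟩ := hz z List.mem_cons_self
      have hzp : Prime ((p i : A)) := hpA i
      obtain ⟨t, ht⟩ := hdvd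
      have hpt : ((p i : A)) ∣ x * t := ⟨L''.prod * a, by rw [← ht, List.prod_cons]; ring⟩
      rcases hzp.dvd_mul.mp hpt with h | h
      · exact absurd h (hnd i)
      · obtain ⟨t', rfl⟩ := h
        refine ih (fun w hw => hz w (List.mem_cons_of_mem _ hw)) a ⟨t', ?_⟩
        have h3 : ((p i : A)) * (L''.prod * a) = ((p i : A)) * (x * t') := by
          rw [List.prod_cons] at ht
          linear_combination ht
        exact mul_left_cancel₀ hzp.ne_zero h3
  have hxdvd : ∀ a ∈ RingHom.ker Φ, x ∣ a := by
    intro a ha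
    have h1 : x ∣ fA ^ m * a := dvd_trans ⟨L.prod, by rw [hx₁x]; ring⟩ (hIdvd a ha)
    exact cancel M hMmem a (by rwa [hMprod])
  -- R[x₁] ⊆ R[x]
  have hadjx : Algebra.adjoin R {x₁} ≤ Algebra.adjoin R {x} := by
    apply Algebra.adjoin_le
    intro z hz
    rw [Set.mem_singleton_iff] at hz
    subst hz
    rw [hx₁x, ← hcRA]
    exact mul_mem (Subalgebra.algebraMap_mem _ cR) (Algebra.subset_adjoin rfl)
  have hlocx : ∀ a : A, ∃ k : ℕ, fA ^ k * a ∈ Algebra.adjoin R {x} := by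
    intro a
    obtain ⟨k, hk⟩ := hloc1 a
    exact ⟨k, hadjx hk⟩
  -- main induction on degree
  have key : ∀ (d : ℕ) (a : A) (k : ℕ) (P : Polynomial R),
      Polynomial.aeval x P = fA ^ k * a → P.natDegree ≤ d → a ∈ Algebra.adjoin R {x} := by
    intro d
    induction d using Nat.strong_induction_on with
    | _ d ihd =>
      intro a k P hP hdeg
      set r : R := Φ a with hr_def
      have harI : a - ((r : R) : A) ∈ RingHom.ker Φ := by
        rw [RingHom.mem_ker, map_sub, hΦ, hr_def, sub_self]
      by_cases h0 : a - ((r : R) : A) = 0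
      · have : a = ((r : R) : A) := by
          rw [sub_eq_zero] at h0; exact h0
        rw [this]
        exact Subalgebra.algebraMap_mem _ r
      · obtain ⟨b, hb⟩ := hxdvd _ harI
        have hb0 : b ≠ 0 := by
          intro h
          exact h0 (by rw [hb, h, mul_zero])
        set Q : Polynomial R := P - C (fR ^ k * r) with hQ_def
        have hcoe : (algebraMap R A) (fR ^ k * r) = fA ^ k * ((r : R) : A) := by
          have : (algebraMap R A) (fR ^ k * r) = (((fR ^ k * r : R) : A)) := rfl
          rw [this]
          push_cast [hfA]
          ring
        have hQev : Polynomial.aeval x Q = x * (fA ^ k * b) := by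
          rw [hQ_def, map_sub, hP, Polynomial.aeval_C, hcoe]
          calc fA ^ k * a - fA ^ k * ((r : R) : A) = fA ^ k * (a - ((r : R) : A)) := by ring
            _ = x * (fA ^ k * b) := by rw [hb]; ring
        have hQc : Q.coeff 0 = 0 := by
          rw [← phi_aeval9 Φ hΦ hΦx Q, hQev, map_mul, hΦx, zero_mul]
        obtain ⟨Q', hQ'⟩ := X_dvd_iff.mpr hQc
        have hQ'ev : Polynomial.aeval x Q' = fA ^ k * b := by
          have h1 : x * Polynomial.aeval x Q' = x * (fA ^ k * b) := by
            rw [← hQev, hQ', map_mul, Polynomial.aeval_X]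
          exact mul_left_cancel₀ hx0 h1
        have hQ'0 : Q' ≠ 0 := by
          intro h
          rw [h, map_zero] at hQ'ev
          exact (mul_ne_zero (pow_ne_zero _ hfA0) hb0) hQ'ev.symm
        have hdQ : Q.natDegree ≤ P.natDegree := by
          refine le_trans (Polynomial.natDegree_sub_le _ _) ?_
          rw [Polynomial.natDegree_C]
          simp
        have hdeg1 : Q.natDegree = Q'.natDegree + 1 := by
          rw [hQ', Polynomial.natDegree_mul Polynomial.X_ne_zero hQ'0,
            Polynomial.natDegree_X]
          omega
        have hbmem : b ∈ Algebra.adjoin R {x} := by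
          refine ihd Q'.natDegree (by omega) b k Q' hQ'ev le_rfl
        have ha2 : a = ((r : R) : A) + x * b := by rw [← hb]; ring
        rw [ha2]
        exact add_mem (Subalgebra.algebraMap_mem _ r)
          (mul_mem (Algebra.subset_adjoin rfl) hbmem)
  refine ⟨x, hΦx, htrx, ?_⟩
  rw [Algebra.eq_top_iff]
  intro a
  obtain ⟨k, hk⟩ := hlocx a
  rw [Algebra.adjoin_singleton_eq_range_aeval] at hk ⊢
  obtain ⟨P, hP⟩ := hk
  have := key P.natDegree a k P hP le_rfl
  rwa [Algebra.adjoin_singleton_eq_range_aeval] at this
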